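/- (Existence of a dual solution.) Let m₀ ∈ M(𝕋) and set y₀ = Φ̃(m₀) ∈ ℝ^L. Then the dual problem sup { ⟨y₀, p⟩ : p ∈ ℝ^L, ‖Φ̃*(p)‖_∞ ≤ 1 } attains its supremum: there exists p⋆ ∈ ℝ^L with ‖Φ̃*(p⋆)‖_∞ ≤ 1 such that for every p ∈ ℝ^L with ‖Φ̃*(p)‖_∞ ≤ 1 one has ⟨y₀, p⟩ ≤ ⟨y₀, p⋆⟩, where ⟨y, p⟩ = Σ_{ℓ=1}^{L} y_ℓ·p_ℓ. -/
import Mathlib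


open MeasureTheory

/-- Total variation norm of a finite signed measure: `‖m‖_TV = m⁺(univ) + m⁻(univ)`. -/
noncomputable def tvNorm {X : Type*} [MeasurableSpace X] (m : SignedMeasure X) : ℝ :=
  (m.totalVariation Set.univ).toReal

/-- Pairing of a function with a signed measure: `∫ η dm = ∫ η dm⁺ − ∫ η dm⁻`. -/
noncomputable def pairing {X : Type*} [MeasurableSpace X]
    (η : X → ℝ) (m : SignedMeasure X) : ℝ :=
  (∫ x, η x ∂m.toJordanDecomposition.posPart) - ∫ x, η x ∂m.toJordanDecomposition.negPart

/-- Supremum norm `‖η‖_∞ = sup_t |η t|`. -/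
noncomputable def supNorm {X : Type*} (η : X → ℝ) : ℝ :=
  sSup (Set.range fun t => |η t|)

/-- **existence of a dual solution.** With continuous measurements
`φ_1, …, φ_L : 𝕋 → ℝ`, `Φ̃(m) = (∫ φ_ℓ dm)_ℓ`, `Φ̃*(p) = Σ_ℓ p_ℓ·φ_ℓ`, and data
`y₀ = Φ̃(m₀)`, the dual problem `sup { ⟨y₀, p⟩ : ‖Φ̃*(p)‖_∞ ≤ 1 }` attains its
supremum at some `p⋆`. -/
theorem exists_dual_solution_continuous_basis_pursuit (T : ℝ) [Fact (0 < T)]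
    (L : ℕ) (hL : 1 ≤ L) (φ : Fin L → AddCircle T → ℝ) (hφ : ∀ ℓ, Continuous (φ ℓ))
    (m₀ : SignedMeasure (AddCircle T)) (y₀ : Fin L → ℝ)
    (hy₀ : ∀ ℓ, pairing (φ ℓ) m₀ = y₀ ℓ) :
    ∃ pstar : Fin L → ℝ,
      supNorm (fun t => ∑ ℓ, pstar ℓ * φ ℓ t) ≤ 1 ∧
      ∀ p : Fin L → ℝ, supNorm (fun t => ∑ ℓ, p ℓ * φ ℓ t) ≤ 1 →
        ∑ ℓ, y₀ ℓ * p ℓ ≤ ∑ ℓ, y₀ ℓ * pstar ℓ := by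
  classical
  set μp := m₀.toJordanDecomposition.posPart with hμp
  set μn := m₀.toJordanDecomposition.negPart with hμn
  set Φ : Fin L → C(AddCircle T, ℝ) := fun ℓ => ⟨φ ℓ, hφ ℓ⟩ with hΦ
  -- every continuous function is integrable
  have hint : ∀ (f : C(AddCircle T, ℝ)) (μ : Measure (AddCircle T)) [IsFiniteMeasure μ],
      Integrable (⇑f) μ := fun f μ _ =>
    f.continuous.integrable_of_hasCompactSupport (HasCompactSupport.of_compactSpace _)
  -- the measurement adjoint as a linear map into C(𝕋, ℝ)
  set A : (Fin L → ℝ) →ₗ[ℝ] C(AddCircle T, ℝ) :=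
    { toFun := fun p => ∑ ℓ, p ℓ • Φ ℓ
      map_add' := by
        intro p q
        simp [add_smul, Finset.sum_add_distrib]
      map_smul' := by
        intro c p
        simp [smul_smul, Finset.smul_sum] } with hA
  -- the pairing with m₀ as a linear functional
  set J : C(AddCircle T, ℝ) →ₗ[ℝ] ℝ :=
    { toFun := fun f => (∫ x, f x ∂μp) - ∫ x, f x ∂μn
      map_add' := by
        intro f g
        show (∫ x, (f + g) x ∂μp) - (∫ x, (f + g) x ∂μn) = _
        simp only [ContinuousMap.add_apply]
        rw [integral_add (hint f μp) (hint g μp), integral_add (hint f μn) (hint g μn)]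
        ring
      map_smul' := by
        intro c f
        show (∫ x, (c • f) x ∂μp) - (∫ x, (c • f) x ∂μn) = _
        simp only [ContinuousMap.smul_apply, smul_eq_mul, integral_const_mul, RingHom.id_apply]
        ring } with hJ
  -- supNorm equals the ContinuousMap norm
  have hsup : ∀ f : C(AddCircle T, ℝ), supNorm (⇑f) = ‖f‖ := by
    intro f
    rw [ContinuousMap.norm_eq_iSup_norm]
    simp [supNorm, iSup, Real.norm_eq_abs]
  -- the objective evaluated through A
  have hobj : ∀ p : Fin L → ℝ, ∑ ℓ, y₀ ℓ * p ℓ = J (A p) := by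
    intro p
    have : J (A p) = ∑ ℓ, p ℓ • J (Φ ℓ) := by
      rw [hA]
      simp only [LinearMap.coe_mk, AddHom.coe_mk, map_sum, LinearMap.map_smul]
    rw [this]
    refine Finset.sum_congr rfl fun ℓ _ => ?_
    have hJΦ : J (Φ ℓ) = y₀ ℓ := by
      rw [← hy₀ ℓ]
      rfl
    rw [hJΦ]
    simp [mul_comm]
  -- the range of A is a finite-dimensional subspace
  set S := LinearMap.range A with hS
  haveI : FiniteDimensional ℝ S := LinearMap.finiteDimensional_range A
  haveI : ProperSpace S := FiniteDimensional.proper ℝ S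
  -- the objective as a continuous functional on S
  set g : S →ₗ[ℝ] ℝ := J.comp S.subtype with hg
  have hgc : Continuous g := g.continuous_of_finiteDimensional
  -- maximize over the compact unit ball of S
  have hK : IsCompact (Metric.closedBall (0 : S) 1) := isCompact_closedBall 0 1
  have hne : (Metric.closedBall (0 : S) 1).Nonempty := ⟨0, by simp⟩
  obtain ⟨fstar, hfK, hmax⟩ := hK.exists_isMaxOn hne hgc.continuousOn
  obtain ⟨pstar, hpstar⟩ := fstar.2
  refine ⟨pstar, ?_, ?_⟩
  · have : (fun t => ∑ ℓ, pstar ℓ * φ ℓ t) = ⇑(A pstar) := by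
      funext t
      simp [hA, hΦ]
    rw [this, hsup, hpstar]
    have h1 : ‖fstar‖ ≤ 1 := mem_closedBall_zero_iff.mp hfK
    rwa [Submodule.coe_norm] at h1
  · intro p hp
    have hAp : (fun t => ∑ ℓ, p ℓ * φ ℓ t) = ⇑(A p) := by
      funext t
      simp [hA, hΦ]
    rw [hAp, hsup] at hp
    have hmem : (⟨A p, LinearMap.mem_range_self A p⟩ : S) ∈ Metric.closedBall (0 : S) 1 := by
      rw [mem_closedBall_zero_iff]
      exact hp
    have := hmax hmem
    rw [hobj p, hobj pstar, hpstar]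
    exact this
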